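/- arXiv:2106.04013 — 3 statements merged into one kernel-verified Lean document; each statement's English description precedes it below -/
import Mathlib

section
/- If u is uniformly distributed on the unit sphere S^{n-1} in R^n, then Var[2·‖φ₊(u)‖²] = 3/(n+2). -/
open MeasureTheory ProbabilityTheory Real

noncomputable def relu {n : ℕ} (v : EuclideanSpace ℝ (Fin n)) : EuclideanSpace ℝ (Fin n) :=
  WithLp.toLp 2 (fun i => max (v i) 0)

section Iso
variable {n : ℕ}
local notation "E" => EuclideanSpace ℝ (Fin n)

lemma sqrt2_mul : Real.sqrt 2 * Real.sqrt 2 = 2 := Real.mul_self_sqrt (by norm_num)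
lemma sqrt2_ne : Real.sqrt 2 ≠ 0 := by positivity
lemma sqrt2_pow4 : Real.sqrt 2 ^ 4 = 4 := by
  have : Real.sqrt 2 ^ 4 = (Real.sqrt 2 * Real.sqrt 2) * (Real.sqrt 2 * Real.sqrt 2) := by ring
  rw [this, sqrt2_mul]; norm_num

noncomputable def flipMap (i : Fin n) : E →ₗ[ℝ] E where
  toFun v := WithLp.toLp 2 (fun k => if k = i then -(v k) else v k)
  map_add' x y := by
    ext k; by_cases h : k = i <;> simp [h] <;> ring
  map_smul' c x := by
    ext k; by_cases h : k = i <;> simp [h]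

lemma flipMap_invol (i : Fin n) : Function.Involutive (flipMap i) := by
  intro v; ext k; by_cases h : k = i <;> simp [flipMap, h]

noncomputable def flipIso (i : Fin n) : E ≃ₗᵢ[ℝ] E :=
  LinearEquiv.isometryOfInner (LinearEquiv.ofInvolutive (flipMap i) (flipMap_invol i)) (by
    intro x y
    simp only [LinearEquiv.coe_ofInvolutive, flipMap, LinearMap.coe_mk, AddHom.coe_mk,
      PiLp.inner_apply, RCLike.inner_apply, conj_trivial]
    apply Finset.sum_congr rfl
    intro k _
    by_cases h : k = i <;> simp [h])

lemma flipIso_apply (i : Fin n) (v : E) (k : Fin n) :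
    flipIso i v k = if k = i then -(v k) else v k := rfl

noncomputable def reflMap (i j : Fin n) : E →ₗ[ℝ] E where
  toFun v := WithLp.toLp 2 (fun k => if k = i then (v i + v j) / Real.sqrt 2
    else if k = j then (v i - v j) / Real.sqrt 2 else v k)
  map_add' x y := by
    ext k
    by_cases h : k = i
    · simp [h]; ring
    · by_cases h' : k = j
      · have hji : ¬ j = i := fun hh => h (h'.trans hh)
        simp [h, h', hji]; ring
      · simp [h, h']
  map_smul' c x := by
    ext k
    by_cases h : k = i
    · simp [h]; ring
    · by_cases h' : k = j
      · have hji : ¬ j = i := fun hh => h (h'.trans hh)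
        simp [h, h', hji]; ring
      · simp [h, h']

lemma reflMap_invol {i j : Fin n} (hij : i ≠ j) : Function.Involutive (reflMap i j) := by
  intro v; ext k
  by_cases h : k = i
  · subst h
    simp only [reflMap, LinearMap.coe_mk, AddHom.coe_mk, PiLp.toLp_apply, if_pos rfl, if_true,
      eq_self_iff_true, if_neg hij.symm, if_neg hij]
    rw [← add_div, div_div, sqrt2_mul]
    ring
  · by_cases h' : k = j
    · subst h'
      simp only [reflMap, LinearMap.coe_mk, AddHom.coe_mk, PiLp.toLp_apply, if_pos rfl, if_true,
        eq_self_iff_true, if_neg hij.symm, if_neg hij, if_neg h, if_false]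
      rw [← sub_div, div_div, sqrt2_mul]
      ring
    · simp [reflMap, h, h']

lemma refl_inner_aux (a b c d T : ℝ) :
    (a + b) / Real.sqrt 2 * ((c + d) / Real.sqrt 2)
      + ((a - b) / Real.sqrt 2 * ((c - d) / Real.sqrt 2) + T) = a * c + (b * d + T) := by
  rw [div_mul_div_comm, div_mul_div_comm, sqrt2_mul]
  ring

noncomputable def reflIso {i j : Fin n} (hij : i ≠ j) : E ≃ₗᵢ[ℝ] E :=
  LinearEquiv.isometryOfInner
    (LinearEquiv.ofInvolutive (reflMap i j) (reflMap_invol hij)) (by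
    intro x y
    simp only [LinearEquiv.coe_ofInvolutive, reflMap, LinearMap.coe_mk, AddHom.coe_mk,
      PiLp.inner_apply, RCLike.inner_apply, conj_trivial]
    have hji : j ∈ Finset.univ.erase i := Finset.mem_erase.2 ⟨hij.symm, Finset.mem_univ j⟩
    rw [← Finset.add_sum_erase _ _ (Finset.mem_univ i), ← Finset.add_sum_erase _ _ hji,
        ← Finset.add_sum_erase _ _ (Finset.mem_univ i), ← Finset.add_sum_erase _ _ hji]
    have hsum : ∀ k ∈ (Finset.univ.erase i).erase j,
        (if k = i then (x i + x j) / Real.sqrt 2 else if k = j then (x i - x j) / Real.sqrt 2 else x k) *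
        (if k = i then (y i + y j) / Real.sqrt 2 else if k = j then (y i - y j) / Real.sqrt 2 else y k)
        = x k * y k := by
      intro k hk
      have hkj : k ≠ j := (Finset.mem_erase.1 hk).1
      have hki : k ≠ i := (Finset.mem_erase.1 (Finset.mem_erase.1 hk).2).1
      simp [hki, hkj]
    rw [Finset.sum_congr rfl fun k hk => (mul_comm _ _).trans ((hsum k hk).trans (mul_comm _ _))]
    simp only [if_pos rfl, if_neg hij.symm, if_neg hij]
    exact refl_inner_aux _ _ _ _ _)

lemma reflIso_apply {i j : Fin n} (hij : i ≠ j) (v : E) (k : Fin n) :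
    reflIso hij v k = if k = i then (v i + v j) / Real.sqrt 2
      else if k = j then (v i - v j) / Real.sqrt 2 else v k := rfl

end Iso

lemma relu_sq_add (x : ℝ) : max x 0 ^ 2 + max (-x) 0 ^ 2 = x ^ 2 := by
  rcases le_total x 0 with h | h
  · rw [max_eq_right h, max_eq_left (neg_nonneg.2 h)]; ring
  · rw [max_eq_left h, max_eq_right (neg_nonpos.2 h)]; ring

lemma relu_pow4_add (x : ℝ) : max x 0 ^ 4 + max (-x) 0 ^ 4 = x ^ 4 := by
  rcases le_total x 0 with h | h
  · rw [max_eq_right h, max_eq_left (neg_nonneg.2 h)]; ring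
  · rw [max_eq_left h, max_eq_right (neg_nonpos.2 h)]; ring

lemma max_sq_le (x : ℝ) : max x 0 ^ 2 ≤ x ^ 2 := by
  rcases le_total x 0 with h | h
  · rw [max_eq_right h]; simpa using sq_nonneg x
  · rw [max_eq_left h]

lemma quart_aux (x y : ℝ) : ((x + y)/Real.sqrt 2)^4 + ((x - y)/Real.sqrt 2)^4
    = (x^4 + y^4)/2 + 3*(x^2*y^2) := by
  rw [div_pow, div_pow, sqrt2_pow4]
  ring

lemma relu_norm_sq {n : ℕ} (v : EuclideanSpace ℝ (Fin n)) :
    ‖relu v‖^2 = ∑ i, max (v i) 0 ^ 2 := by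
  rw [EuclideanSpace.norm_eq, Real.sq_sqrt (by positivity)]
  refine Finset.sum_congr rfl fun i _ => ?_
  have : relu v i = max (v i) 0 := rfl
  rw [this, Real.norm_eq_abs, sq_abs]

section THM
set_option maxHeartbeats 2000000 in
/-- If u is uniform on the sphere S^{n-1}, then Var[2‖φ₊(u)‖²] = 3/(n+2). -/
theorem stmt_1 {Ω : Type*} [MeasureSpace Ω] [IsProbabilityMeasure (ℙ : Measure Ω)]
    (n : ℕ) (u : Ω → EuclideanSpace ℝ (Fin n))
    (hu : Measurable u)
    (hsph : ∀ ω, ‖u ω‖ = 1)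
    (hrot : ∀ O : EuclideanSpace ℝ (Fin n) ≃ₗᵢ[ℝ] EuclideanSpace ℝ (Fin n),
      IdentDistrib (fun ω => O (u ω)) u ℙ ℙ) :
    variance (fun ω => 2 * ‖relu (u ω)‖ ^ 2) ℙ = 3 / ((n : ℝ) + 2) := by
  classical
  -- dispose of n = 0
  rcases Nat.eq_zero_or_pos n with hn0 | hnpos
  · exfalso
    have hne : Nonempty Ω := by
      by_contra h
      rw [not_nonempty_iff] at h
      have h1 : (ℙ : Measure Ω) Set.univ = 1 := measure_univ
      rw [Set.univ_eq_empty_iff.2 h] at h1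
      simp at h1
    obtain ⟨ω⟩ := hne
    have h1 := hsph ω
    have h2 : u ω = 0 := by
      subst hn0
      ext i; exact i.elim0
    rw [h2, norm_zero] at h1
    exact one_ne_zero h1.symm
  have hge1 : 1 ≤ n := hnpos
  -- measurability of coordinates
  have mc : ∀ i : Fin n, Measurable fun v : EuclideanSpace ℝ (Fin n) => v i :=
    fun i => (EuclideanSpace.proj (𝕜 := ℝ) i).continuous.measurable
  have hco : ∀ i, Measurable fun ω => u ω i := fun i => (mc i).comp hu
  -- sphere facts
  have hsum : ∀ ω, ∑ i, (u ω i)^2 = 1 := by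
    intro ω
    have h := hsph ω
    rw [EuclideanSpace.norm_eq] at h
    simp only [Real.norm_eq_abs, sq_abs] at h
    exact Real.sqrt_eq_one.1 h
  have hsq : ∀ ω (i : Fin n), (u ω i)^2 ≤ 1 := by
    intro ω i
    rw [← hsum ω]
    exact Finset.single_le_sum (f := fun i => (u ω i)^2) (fun j _ => sq_nonneg _)
      (Finset.mem_univ i)
  have hsqneg : ∀ ω (i : Fin n), (-(u ω i))^2 ≤ 1 := fun ω i => by
    rw [neg_sq]; exact hsq ω i
  -- integrability helpers
  have hmem : ∀ g : Ω → ℝ, Measurable g → (∀ ω, |g ω| ≤ 4) → MemLp g 2 ℙ := fun g hg hb =>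
    MemLp.of_bound hg.aestronglyMeasurable 4
      (Filter.Eventually.of_forall fun ω => by simpa [Real.norm_eq_abs] using hb ω)
  have hint : ∀ g : Ω → ℝ, Measurable g → (∀ ω, |g ω| ≤ 4) → Integrable g ℙ := fun g hg hb =>
    (hmem g hg hb).integrable one_le_two
  -- bound lemmas
  have b2 : ∀ x : ℝ, x^2 ≤ 1 → |x^2| ≤ 4 := by
    intro x h; rw [abs_of_nonneg (sq_nonneg x)]; linarith
  have b4 : ∀ x : ℝ, x^2 ≤ 1 → |x^4| ≤ 4 := by
    intro x h; rw [abs_of_nonneg (by positivity)]; nlinarith [sq_nonneg x]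
  have b22 : ∀ x y : ℝ, x^2 ≤ 1 → y^2 ≤ 1 → |x^2*y^2| ≤ 4 := by
    intro x y hx hy; rw [abs_of_nonneg (by positivity)]; nlinarith [sq_nonneg x, sq_nonneg y]
  have bmsq : ∀ x : ℝ, x^2 ≤ 1 → |max x 0^2| ≤ 4 := by
    intro x h; rw [abs_of_nonneg (by positivity)]
    have := max_sq_le x; linarith
  have bm4 : ∀ x : ℝ, x^2 ≤ 1 → |max x 0^4| ≤ 4 := by
    intro x h
    rw [abs_of_nonneg (by positivity)]
    have h1 : max x 0 ^ 2 ≤ 1 := le_trans (max_sq_le x) h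
    have h2 : (0:ℝ) ≤ max x 0 ^2 := by positivity
    nlinarith
  have bmm : ∀ x y : ℝ, x^2 ≤ 1 → y^2 ≤ 1 → |max x 0^2 * max y 0^2| ≤ 4 := by
    intro x y hx hy
    rw [abs_of_nonneg (by positivity)]
    have h1 : max x 0 ^ 2 ≤ 1 := le_trans (max_sq_le x) hx
    have h2 : max y 0 ^ 2 ≤ 1 := le_trans (max_sq_le y) hy
    have h3 : (0:ℝ) ≤ max x 0 ^2 := by positivity
    have h4 : (0:ℝ) ≤ max y 0 ^2 := by positivity
    nlinarith
  have bq : ∀ x y : ℝ, x^2 ≤ 1 → y^2 ≤ 1 → |((x+y)/Real.sqrt 2)^4| ≤ 4 := by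
    intro x y hx hy
    rw [div_pow, sqrt2_pow4, abs_of_nonneg (by positivity)]
    have h1 : (x+y)^2 ≤ 4 := by nlinarith [sq_nonneg (x - y)]
    nlinarith [sq_nonneg (x+y)]
  have bq' : ∀ x y : ℝ, x^2 ≤ 1 → y^2 ≤ 1 → |((x-y)/Real.sqrt 2)^4| ≤ 4 := by
    intro x y hx hy
    have := bq x (-y) hx (by rw [neg_sq]; exact hy)
    simpa [sub_eq_add_neg] using this
  -- transfer along isometries
  have hO : ∀ (O : EuclideanSpace ℝ (Fin n) ≃ₗᵢ[ℝ] EuclideanSpace ℝ (Fin n))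
      (g : EuclideanSpace ℝ (Fin n) → ℝ), Measurable g →
      (∫ ω, g (O (u ω))) = ∫ ω, g (u ω) := fun O g hg => ((hrot O).comp hg).integral_eq
  -- measurable composites on E
  have m4 : ∀ i : Fin n, Measurable fun v : EuclideanSpace ℝ (Fin n) => (v i)^4 :=
    fun i => (mc i).pow_const 4
  have mrel : ∀ i : Fin n, Measurable fun v : EuclideanSpace ℝ (Fin n) => max (v i) 0 ^ 2 :=
    fun i => ((mc i).max measurable_const).pow_const 2
  have mrel4 : ∀ i : Fin n, Measurable fun v : EuclideanSpace ℝ (Fin n) => max (v i) 0 ^ 4 :=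
    fun i => ((mc i).max measurable_const).pow_const 4
  have mmm : ∀ i j : Fin n,
      Measurable fun v : EuclideanSpace ℝ (Fin n) => max (v i) 0^2 * max (v j) 0^2 :=
    fun i j => (mrel i).mul (mrel j)
  -- integrable families
  have int2 : ∀ i, Integrable (fun ω => (u ω i)^2) ℙ := fun i =>
    hint _ ((hco i).pow_const 2) (fun ω => b2 _ (hsq ω i))
  have int4 : ∀ i, Integrable (fun ω => (u ω i)^4) ℙ := fun i =>
    hint _ ((hco i).pow_const 4) (fun ω => b4 _ (hsq ω i))
  have int22 : ∀ i j, Integrable (fun ω => (u ω i)^2 * (u ω j)^2) ℙ := fun i j =>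
    hint _ (((hco i).pow_const 2).mul ((hco j).pow_const 2))
      (fun ω => b22 _ _ (hsq ω i) (hsq ω j))
  have intm : ∀ i, Integrable (fun ω => max (u ω i) 0 ^ 2) ℙ := fun i =>
    hint _ (((hco i).max measurable_const).pow_const 2) (fun ω => bmsq _ (hsq ω i))
  have intm' : ∀ i, Integrable (fun ω => max (-(u ω i)) 0 ^ 2) ℙ := fun i =>
    hint _ (((hco i).neg.max measurable_const).pow_const 2) (fun ω => bmsq _ (hsqneg ω i))
  have intm4 : ∀ i, Integrable (fun ω => max (u ω i) 0 ^ 4) ℙ := fun i =>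
    hint _ (((hco i).max measurable_const).pow_const 4) (fun ω => bm4 _ (hsq ω i))
  have intm4' : ∀ i, Integrable (fun ω => max (-(u ω i)) 0 ^ 4) ℙ := fun i =>
    hint _ (((hco i).neg.max measurable_const).pow_const 4) (fun ω => bm4 _ (hsqneg ω i))
  have intmm : ∀ i j, Integrable (fun ω => max (u ω i) 0 ^2 * max (u ω j) 0^2) ℙ := fun i j =>
    hint _ ((((hco i).max measurable_const).pow_const 2).mul
      (((hco j).max measurable_const).pow_const 2)) (fun ω => bmm _ _ (hsq ω i) (hsq ω j))
  have intmm1 : ∀ i j, Integrable (fun ω => max (u ω i) 0 ^2 * max (-(u ω j)) 0^2) ℙ :=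
    fun i j => hint _ ((((hco i).max measurable_const).pow_const 2).mul
      (((hco j).neg.max measurable_const).pow_const 2))
      (fun ω => bmm _ _ (hsq ω i) (hsqneg ω j))
  have intmm2 : ∀ i j, Integrable (fun ω => max (-(u ω i)) 0 ^2 * max (u ω j) 0^2) ℙ :=
    fun i j => hint _ ((((hco i).neg.max measurable_const).pow_const 2).mul
      (((hco j).max measurable_const).pow_const 2))
      (fun ω => bmm _ _ (hsqneg ω i) (hsq ω j))
  have intmm3 : ∀ i j, Integrable (fun ω => max (-(u ω i)) 0 ^2 * max (-(u ω j)) 0^2) ℙ :=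
    fun i j => hint _ ((((hco i).neg.max measurable_const).pow_const 2).mul
      (((hco j).neg.max measurable_const).pow_const 2))
      (fun ω => bmm _ _ (hsqneg ω i) (hsqneg ω j))
  have intq1 : ∀ i j, Integrable (fun ω => ((u ω i + u ω j)/Real.sqrt 2)^4) ℙ := fun i j =>
    hint _ ((((hco i).add (hco j)).div_const _).pow_const 4)
      (fun ω => bq _ _ (hsq ω i) (hsq ω j))
  have intq2 : ∀ i j, Integrable (fun ω => ((u ω i - u ω j)/Real.sqrt 2)^4) ℙ := fun i j =>
    hint _ ((((hco i).sub (hco j)).div_const _).pow_const 4)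
      (fun ω => bq' _ _ (hsq ω i) (hsq ω j))
  -- abbreviations (as plain reals)
  -- diagonal : ∫ m_i * m_i = (∫ u_i^4)/2
  have hdiagM : ∀ i, (∫ ω, max (u ω i) 0^2 * max (u ω i) 0^2) = (∫ ω, (u ω i)^4)/2 := by
    intro i
    have hflip4 : (∫ ω, max (-(u ω i)) 0 ^ 4) = ∫ ω, max (u ω i) 0 ^ 4 := by
      have h := hO (flipIso i) (fun v => max (v i) 0 ^ 4) (mrel4 i)
      simpa [flipIso_apply] using h
    have key : (∫ ω, (u ω i)^4)
        = (∫ ω, max (u ω i) 0^4) + ∫ ω, max (-(u ω i)) 0^4 := by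
      rw [← integral_add (intm4 i) (intm4' i)]
      exact integral_congr_ae (Filter.Eventually.of_forall fun ω =>
        (relu_pow4_add (u ω i)).symm)
    have hsq4 : (∫ ω, max (u ω i) 0^2 * max (u ω i) 0^2) = ∫ ω, max (u ω i) 0^4 :=
      integral_congr_ae (Filter.Eventually.of_forall fun ω => by ring)
    rw [hsq4, key, hflip4]; ring
  -- off-diagonal : ∫ m_i * m_j = (∫ u_i² u_j²)/4
  have hoffM : ∀ i j, i ≠ j →
      (∫ ω, max (u ω i) 0^2 * max (u ω j) 0^2) = (∫ ω, (u ω i)^2*(u ω j)^2)/4 := by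
    intro i j hij
    have hij' : ¬ i = j := hij
    have hji' : ¬ j = i := fun h => hij h.symm
    have t1 : (∫ ω, max (u ω i) 0^2 * max (-(u ω j)) 0^2)
        = ∫ ω, max (u ω i) 0^2 * max (u ω j) 0^2 := by
      have h := hO (flipIso j) (fun v => max (v i) 0^2 * max (v j) 0^2) (mmm i j)
      simpa [flipIso_apply, hij'] using h
    have t2 : (∫ ω, max (-(u ω i)) 0^2 * max (u ω j) 0^2)
        = ∫ ω, max (u ω i) 0^2 * max (u ω j) 0^2 := by
      have h := hO (flipIso i) (fun v => max (v i) 0^2 * max (v j) 0^2) (mmm i j)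
      simpa [flipIso_apply, hji'] using h
    have t3 : (∫ ω, max (-(u ω i)) 0^2 * max (-(u ω j)) 0^2)
        = ∫ ω, max (u ω i) 0^2 * max (u ω j) 0^2 := by
      have h := hO ((flipIso i).trans (flipIso j))
        (fun v => max (v i) 0^2 * max (v j) 0^2) (mmm i j)
      simpa [LinearIsometryEquiv.trans_apply, flipIso_apply, hij', hji'] using h
    have key : (∫ ω, (u ω i)^2*(u ω j)^2)
        = ((∫ ω, max (u ω i) 0^2 * max (u ω j) 0^2)
          + (∫ ω, max (u ω i) 0^2 * max (-(u ω j)) 0^2))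
          + ((∫ ω, max (-(u ω i)) 0^2 * max (u ω j) 0^2)
          + (∫ ω, max (-(u ω i)) 0^2 * max (-(u ω j)) 0^2)) := by
      calc (∫ ω, (u ω i)^2*(u ω j)^2)
          = ∫ ω, ((max (u ω i) 0^2 * max (u ω j) 0^2
              + max (u ω i) 0^2 * max (-(u ω j)) 0^2)
            + (max (-(u ω i)) 0^2 * max (u ω j) 0^2
              + max (-(u ω i)) 0^2 * max (-(u ω j)) 0^2)) := by
            refine integral_congr_ae (Filter.Eventually.of_forall fun ω => ?_)
            have h1 := relu_sq_add (u ω i)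
            have h2 := relu_sq_add (u ω j)
            linear_combination (-(max (u ω j) 0^2 + max (-(u ω j)) 0^2)) * h1 - (u ω i)^2 * h2
        _ = (∫ ω, (max (u ω i) 0^2 * max (u ω j) 0^2
              + max (u ω i) 0^2 * max (-(u ω j)) 0^2))
            + ∫ ω, (max (-(u ω i)) 0^2 * max (u ω j) 0^2
              + max (-(u ω i)) 0^2 * max (-(u ω j)) 0^2) :=
            integral_add ((intmm i j).add (intmm1 i j)) ((intmm2 i j).add (intmm3 i j))
        _ = ((∫ ω, max (u ω i) 0^2 * max (u ω j) 0^2)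
              + (∫ ω, max (u ω i) 0^2 * max (-(u ω j)) 0^2))
            + ((∫ ω, max (-(u ω i)) 0^2 * max (u ω j) 0^2)
              + (∫ ω, max (-(u ω i)) 0^2 * max (-(u ω j)) 0^2)) :=
            congrArg₂ (· + ·) (integral_add (intmm i j) (intmm1 i j))
              (integral_add (intmm2 i j) (intmm3 i j))
    rw [key, t1, t2, t3]; ring
  -- 45 degree rotation : ∫ u_i² u_j² = (∫ u_i^4 + ∫ u_j^4)/6
  have hb6 : ∀ i j, i ≠ j →
      (∫ ω, (u ω i)^2*(u ω j)^2) = ((∫ ω, (u ω i)^4) + ∫ ω, (u ω j)^4)/6 := by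
    intro i j hij
    have hij' : ¬ i = j := hij
    have hji' : ¬ j = i := fun h => hij h.symm
    have r1 : (∫ ω, ((u ω i + u ω j)/Real.sqrt 2)^4) = ∫ ω, (u ω i)^4 := by
      have h := hO (reflIso hij) (fun v => (v i)^4) (m4 i)
      simpa [reflIso_apply] using h
    have r2 : (∫ ω, ((u ω i - u ω j)/Real.sqrt 2)^4) = ∫ ω, (u ω j)^4 := by
      have h := hO (reflIso hij) (fun v => (v j)^4) (m4 j)
      simpa [reflIso_apply, hji'] using h
    have e1 : (∫ ω, (((u ω i + u ω j)/Real.sqrt 2)^4 + ((u ω i - u ω j)/Real.sqrt 2)^4))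
        = (∫ ω, (u ω i)^4) + ∫ ω, (u ω j)^4 := by
      rw [integral_add (intq1 i j) (intq2 i j), r1, r2]
    have e2 : (∫ ω, (((u ω i + u ω j)/Real.sqrt 2)^4 + ((u ω i - u ω j)/Real.sqrt 2)^4))
        = ((∫ ω, (u ω i)^4) + ∫ ω, (u ω j)^4)/2 + 3 * ∫ ω, (u ω i)^2*(u ω j)^2 := by
      calc (∫ ω, (((u ω i + u ω j)/Real.sqrt 2)^4 + ((u ω i - u ω j)/Real.sqrt 2)^4))
          = ∫ ω, (((u ω i)^4 + (u ω j)^4)/2 + 3*((u ω i)^2*(u ω j)^2)) :=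
            integral_congr_ae (Filter.Eventually.of_forall fun ω => quart_aux _ _)
        _ = (∫ ω, ((u ω i)^4 + (u ω j)^4)/2) + ∫ ω, 3*((u ω i)^2*(u ω j)^2) :=
            integral_add (((int4 i).add (int4 j)).div_const 2) ((int22 i j).const_mul 3)
        _ = (∫ ω, ((u ω i)^4 + (u ω j)^4))/2 + 3 * ∫ ω, (u ω i)^2*(u ω j)^2 := by
            rw [integral_div, integral_const_mul]
        _ = ((∫ ω, (u ω i)^4) + ∫ ω, (u ω j)^4)/2 + 3 * ∫ ω, (u ω i)^2*(u ω j)^2 := by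
            rw [integral_add (int4 i) (int4 j)]
    linarith [e1, e2]
  -- total second moment identity
  have S1 : ∑ i, ∑ j, (∫ ω, (u ω i)^2*(u ω j)^2) = 1 := by
    have h1 : ∀ i : Fin n, ∑ j, (∫ ω, (u ω i)^2*(u ω j)^2)
        = ∫ ω, ∑ j, (u ω i)^2*(u ω j)^2 :=
      fun i => (integral_finset_sum _ fun j _ => int22 i j).symm
    rw [Finset.sum_congr rfl fun i _ => h1 i,
      ← integral_finset_sum _ fun i _ => integrable_finset_sum _ fun j _ => int22 i j]
    have h2 : ∀ ω, (∑ i, ∑ j, (u ω i)^2*(u ω j)^2) = 1 := by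
      intro ω
      rw [← Finset.sum_mul_sum, hsum ω, one_mul]
    rw [integral_congr_ae (Filter.Eventually.of_forall h2)]
    simp
  -- first moments
  have hmhalf : ∀ i, (∫ ω, max (u ω i) 0^2) = (∫ ω, (u ω i)^2)/2 := by
    intro i
    have hflip2 : (∫ ω, max (-(u ω i)) 0 ^ 2) = ∫ ω, max (u ω i) 0 ^ 2 := by
      have h := hO (flipIso i) (fun v => max (v i) 0 ^ 2) (mrel i)
      simpa [flipIso_apply] using h
    have key : (∫ ω, (u ω i)^2)
        = (∫ ω, max (u ω i) 0^2) + ∫ ω, max (-(u ω i)) 0^2 := by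
      rw [← integral_add (intm i) (intm' i)]
      exact integral_congr_ae (Filter.Eventually.of_forall fun ω =>
        (relu_sq_add (u ω i)).symm)
    rw [key, hflip2]; ring
  have hc1 : ∑ i, (∫ ω, (u ω i)^2) = 1 := by
    rw [← integral_finset_sum _ fun i _ => int2 i,
      integral_congr_ae (Filter.Eventually.of_forall hsum)]
    simp
  -- rewrite the random variable
  have hXfun : (fun ω => 2 * ‖relu (u ω)‖ ^ 2) = fun ω => 2 * ∑ i, max (u ω i) 0^2 :=
    funext fun ω => by rw [relu_norm_sq]
  have measX : Measurable fun ω => 2 * ∑ i, max (u ω i) 0^2 :=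
    (Finset.measurable_sum _ fun i _ => ((hco i).max measurable_const).pow_const 2).const_mul 2
  have boundX : ∀ ω, |2 * ∑ i, max (u ω i) 0^2| ≤ 4 := by
    intro ω
    have h1 : (∑ i, max (u ω i) 0^2) ≤ 1 := by
      rw [← hsum ω]
      exact Finset.sum_le_sum fun i _ => max_sq_le _
    have h2 : (0:ℝ) ≤ ∑ i, max (u ω i) 0^2 :=
      Finset.sum_nonneg fun i _ => by positivity
    rw [abs_of_nonneg (by linarith)]
    linarith
  rw [hXfun, variance_eq_sub (hmem _ measX boundX)]
  -- compute the two moments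
  have hEX : (∫ ω, 2 * ∑ i, max (u ω i) 0^2) = 1 := by
    rw [integral_const_mul, integral_finset_sum _ fun i _ => intm i,
      Finset.sum_congr rfl fun i _ => hmhalf i, ← Finset.sum_div, hc1]
    norm_num
  have hEX2 : (∫ ω, (2 * ∑ i, max (u ω i) 0^2)^2)
      = 4 * ∑ i, ∑ j, (∫ ω, max (u ω i) 0^2 * max (u ω j) 0^2) := by
    have hpt : ∀ ω, (2 * ∑ i, max (u ω i) 0^2)^2
        = 4 * ∑ i, ∑ j, max (u ω i) 0^2 * max (u ω j) 0^2 := by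
      intro ω
      rw [← Finset.sum_mul_sum]
      ring
    rw [integral_congr_ae (Filter.Eventually.of_forall hpt), integral_const_mul,
      integral_finset_sum _ fun i _ => integrable_finset_sum _ fun j _ => intmm i j]
    congr 1
    exact Finset.sum_congr rfl fun i _ => integral_finset_sum _ fun j _ => intmm i j
  simp only [Pi.pow_apply]
  rw [hEX2, hEX]
  -- final algebra
  have hsplit : ∀ f : Fin n → Fin n → ℝ,
      (∑ i, ∑ j, f i j) = (∑ i, f i i) + ∑ i, ∑ j ∈ Finset.univ.erase i, f i j := by
    intro f
    rw [← Finset.sum_add_distrib]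
    exact Finset.sum_congr rfl fun i _ => (Finset.add_sum_erase _ _ (Finset.mem_univ i)).symm
  have hrow : ∀ i : Fin n, (∑ j ∈ Finset.univ.erase i, (∫ ω, (u ω i)^2*(u ω j)^2))
      = (((n:ℝ) - 1) * (∫ ω, (u ω i)^4) + ((∑ k, ∫ ω, (u ω k)^4) - ∫ ω, (u ω i)^4))/6 := by
    intro i
    rw [Finset.sum_congr rfl fun j hj => hb6 i j
      (fun h => (Finset.mem_erase.1 hj).1 h.symm)]
    rw [← Finset.sum_div, Finset.sum_add_distrib, Finset.sum_const,
      Finset.card_erase_of_mem (Finset.mem_univ i), Finset.card_univ, Fintype.card_fin,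
      Finset.sum_erase_eq_sub (Finset.mem_univ i), nsmul_eq_mul,
      Nat.cast_sub hge1, Nat.cast_one]
  have hoffsum : (∑ i, ∑ j ∈ Finset.univ.erase i, (∫ ω, (u ω i)^2*(u ω j)^2))
      = 2*((n:ℝ) - 1) * (∑ k, ∫ ω, (u ω k)^4) / 6 := by
    rw [Finset.sum_congr rfl fun i _ => hrow i, ← Finset.sum_div]
    rw [Finset.sum_add_distrib, ← Finset.mul_sum, Finset.sum_sub_distrib,
      Finset.sum_const, Finset.card_univ, Fintype.card_fin, nsmul_eq_mul]
    ring
  have hbd : ∀ i : Fin n, (∫ ω, (u ω i)^2*(u ω i)^2) = ∫ ω, (u ω i)^4 := fun i =>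
    integral_congr_ae (Filter.Eventually.of_forall fun ω => by ring)
  have hE1 : (∑ k, ∫ ω, (u ω k)^4)
      + 2*((n:ℝ) - 1) * (∑ k, ∫ ω, (u ω k)^4) / 6 = 1 := by
    rw [hsplit (fun i j => ∫ ω, (u ω i)^2*(u ω j)^2)] at S1
    rw [Finset.sum_congr rfl fun i _ => hbd i, hoffsum] at S1
    exact S1
  have hMsum : (∑ i, ∑ j, (∫ ω, max (u ω i) 0^2 * max (u ω j) 0^2))
      = (∑ k, ∫ ω, (u ω k)^4)/2 + (2*((n:ℝ) - 1) * (∑ k, ∫ ω, (u ω k)^4) / 6)/4 := by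
    rw [hsplit (fun i j => ∫ ω, max (u ω i) 0^2 * max (u ω j) 0^2)]
    congr 1
    · rw [Finset.sum_congr rfl fun i _ => hdiagM i, ← Finset.sum_div]
    · rw [Finset.sum_congr rfl fun i _ => Finset.sum_congr rfl fun j hj => hoffM i j
        (fun h => (Finset.mem_erase.1 hj).1 h.symm)]
      rw [Finset.sum_congr rfl fun i _ => (Finset.sum_div _ _ 4).symm, ← Finset.sum_div,
        hoffsum]
  rw [hMsum]
  have hn2 : ((n:ℝ) + 2) ≠ 0 := by positivity
  rw [eq_div_iff hn2]
  linear_combination ((n:ℝ) + 5) * hE1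
end THM
end

section
/- Let z ∈ R^n be any random vector and g ∈ R^n an independent standard Gaussian vector. Define X = ‖α e₁ + λ √(2/n) ‖φ₊(z)‖ g‖². Then Var(X) = λ⁴ (n+2)/n · Var[2‖φ₊(z)‖²] + (2λ⁴/n) · E[2‖φ₊(z)‖²]² + (4α²λ²/n) · E[2‖φ₊(z)‖²]. -/
open MeasureTheory ProbabilityTheory Real
open Set
open scoped ENNReal NNReal BigOperators

section aux

lemma integrable_pow_mul_exp (k : ℕ) :
    Integrable (fun x : ℝ => x ^ k * Real.exp (-(1/2) * x ^ 2)) := by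
  have h := integrable_rpow_mul_exp_neg_mul_sq (b := 1/2) (by norm_num) (s := (k : ℝ))
    (by exact_mod_cast neg_one_lt_zero.trans_le k.cast_nonneg)
  simpa [Real.rpow_natCast] using h

lemma integral_pow_mul_exp_Ioi (k : ℕ) :
    ∫ x in Ioi (0:ℝ), x ^ k * Real.exp (-(1/2) * x ^ 2)
      = ((1:ℝ)/2) ^ (-((k:ℝ) + 1) / 2) * (1 / 2) * Real.Gamma (((k:ℝ) + 1) / 2) := by
  have h := integral_rpow_mul_exp_neg_mul_rpow (p := 2) (q := (k:ℝ)) (b := 1/2)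
    (by norm_num) (by exact_mod_cast neg_one_lt_zero.trans_le k.cast_nonneg) (by norm_num)
  rw [← h]
  refine setIntegral_congr_fun measurableSet_Ioi (fun x hx => ?_)
  rw [show ((2:ℝ)) = ((2:ℕ):ℝ) by norm_num, Real.rpow_natCast, Real.rpow_natCast]

lemma integral_pow_mul_exp_even (k : ℕ) (hk : Even k) :
    ∫ x : ℝ, x ^ k * Real.exp (-(1/2) * x ^ 2)
      = 2 * ∫ x in Ioi (0:ℝ), x ^ k * Real.exp (-(1/2) * x ^ 2) := by
  rw [← integral_comp_abs (f := fun x => x ^ k * Real.exp (-(1/2) * x ^ 2))]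
  congr 1; funext x
  rw [hk.pow_abs, sq_abs]

lemma integral_pow_mul_exp_odd (k : ℕ) (hk : Odd k) :
    ∫ x : ℝ, x ^ k * Real.exp (-(1/2) * x ^ 2) = 0 := by
  have h := integral_neg_eq_self (fun x : ℝ => x ^ k * Real.exp (-(1/2) * x ^ 2)) volume
  simp only [hk.neg_pow, neg_sq, neg_mul, integral_neg] at h
  simp only [neg_mul] at h ⊢
  linarith

lemma rpow_half_aux (j : ℕ) : ((1:ℝ)/2) ^ (-(((j:ℝ)) + 1/2)) = 2 ^ j * Real.sqrt 2 := by
  rw [one_div, Real.inv_rpow (by norm_num), Real.rpow_neg (by norm_num), inv_inv,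
    Real.rpow_add (by norm_num), Real.rpow_natCast, Real.sqrt_eq_rpow]
  norm_num

lemma integral_sq_mul_exp :
    ∫ x : ℝ, x ^ 2 * Real.exp (-(1/2) * x ^ 2) = Real.sqrt (2 * π) := by
  rw [integral_pow_mul_exp_even 2 (by norm_num : Even 2), integral_pow_mul_exp_Ioi,
    show (-(((2:ℕ):ℝ) + 1) / 2) = -(((1:ℕ):ℝ) + 1/2) by push_cast; norm_num,
    show ((((2:ℕ):ℝ)) + 1) / 2 = 1/2 + 1 by push_cast; norm_num,
    Real.Gamma_add_one (by norm_num), Real.Gamma_one_half_eq, rpow_half_aux,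
    Real.sqrt_mul (by norm_num)]
  norm_num; ring

lemma integral_pow4_mul_exp :
    ∫ x : ℝ, x ^ 4 * Real.exp (-(1/2) * x ^ 2) = 3 * Real.sqrt (2 * π) := by
  rw [integral_pow_mul_exp_even 4 (⟨2, by norm_num⟩ : Even 4), integral_pow_mul_exp_Ioi,
    show (-(((4:ℕ):ℝ) + 1) / 2) = -(((2:ℕ):ℝ) + 1/2) by push_cast; norm_num,
    show ((((4:ℕ):ℝ)) + 1) / 2 = (1/2 + 1) + 1 by push_cast; norm_num,
    Real.Gamma_add_one (by norm_num), Real.Gamma_add_one (by norm_num),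
    Real.Gamma_one_half_eq, rpow_half_aux, Real.sqrt_mul (by norm_num)]
  norm_num; ring

lemma gaussianPDFReal_std (x : ℝ) :
    gaussianPDFReal 0 1 x = (Real.sqrt (2*π))⁻¹ * Real.exp (-(1/2) * x^2) := by
  simp only [gaussianPDFReal, NNReal.coe_one, mul_one, sub_zero]
  rw [show (-x^2/2 : ℝ) = -(1/2)*x^2 by ring]

lemma gaussianReal_std_eq :
    gaussianReal 0 1
      = (volume : Measure ℝ).withDensity (fun x => ((gaussianPDFReal 0 1 x).toNNReal : ℝ≥0∞)) :=
  gaussianReal_of_var_ne_zero 0 one_ne_zero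

lemma measurable_pdf_toNNReal : Measurable fun x => (gaussianPDFReal 0 1 x).toNNReal :=
  (measurable_gaussianPDFReal 0 1).real_toNNReal

lemma integral_pow_gaussianReal (k : ℕ) :
    ∫ x, x ^ k ∂(gaussianReal 0 1)
      = (Real.sqrt (2*π))⁻¹ * ∫ x : ℝ, x ^ k * Real.exp (-(1/2) * x^2) := by
  rw [gaussianReal_std_eq, integral_withDensity_eq_integral_smul measurable_pdf_toNNReal]
  rw [← integral_const_mul]
  congr 1; funext x
  rw [NNReal.smul_def, Real.coe_toNNReal _ (gaussianPDFReal_nonneg 0 1 x),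
    gaussianPDFReal_std, smul_eq_mul]
  ring

lemma integrable_pow_gaussianReal (k : ℕ) :
    Integrable (fun x : ℝ => x ^ k) (gaussianReal 0 1) := by
  rw [gaussianReal_std_eq, integrable_withDensity_iff_integrable_smul measurable_pdf_toNNReal]
  have h := (integrable_pow_mul_exp k).const_mul (Real.sqrt (2*π))⁻¹
  apply h.congr
  filter_upwards with x
  rw [NNReal.smul_def, Real.coe_toNNReal _ (gaussianPDFReal_nonneg 0 1 x),
    gaussianPDFReal_std, smul_eq_mul]
  ring

lemma sqrt_two_pi_ne : Real.sqrt (2*π) ≠ 0 :=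
  Real.sqrt_ne_zero'.mpr (by positivity)

lemma gauss_mom1 : ∫ x, x ^ 1 ∂(gaussianReal 0 1) = 0 := by
  rw [integral_pow_gaussianReal, integral_pow_mul_exp_odd 1 odd_one, mul_zero]

lemma gauss_mom2 : ∫ x, x ^ 2 ∂(gaussianReal 0 1) = 1 := by
  rw [integral_pow_gaussianReal, integral_sq_mul_exp, inv_mul_cancel₀ sqrt_two_pi_ne]

lemma gauss_mom3 : ∫ x, x ^ 3 ∂(gaussianReal 0 1) = 0 := by
  rw [integral_pow_gaussianReal, integral_pow_mul_exp_odd 3 ⟨1, by norm_num⟩, mul_zero]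

lemma gauss_mom4 : ∫ x, x ^ 4 ∂(gaussianReal 0 1) = 3 := by
  rw [integral_pow_gaussianReal, integral_pow4_mul_exp]
  field_simp

lemma norm_sq_eucl {m : ℕ} (v : EuclideanSpace ℝ (Fin m)) : ‖v‖^2 = ∑ i, (v i)^2 := by
  rw [EuclideanSpace.norm_eq, Real.sq_sqrt (by positivity)]
  simp [Real.norm_eq_abs, sq_abs]

lemma eucl_coord_apply {m : ℕ} (a s : ℝ) (j0 i : Fin m) (w : EuclideanSpace ℝ (Fin m)) :
    (a • EuclideanSpace.single j0 (1:ℝ) + s • w) i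
      = a * (if i = j0 then 1 else 0) + s * w i := by
  simp [EuclideanSpace.single_apply]

lemma expand_sq {m : ℕ} (a s : ℝ) (j0 : Fin m) (w : EuclideanSpace ℝ (Fin m)) :
    ‖a • EuclideanSpace.single j0 (1:ℝ) + s • w‖^2
      = a^2 + 2*a*s*(w j0) + s^2 * ∑ i, (w i)^2 := by
  rw [norm_sq_eucl, Finset.sum_congr rfl fun i _ => by rw [eucl_coord_apply a s j0 i w]]
  have hterm : ∀ i : Fin m,
      (a * (if i = j0 then (1:ℝ) else 0) + s * w i)^2
        = (if i = j0 then a^2 + 2*a*s*(w i) else 0) + s^2*(w i)^2 := by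
    intro i; split_ifs <;> ring
  rw [Finset.sum_congr rfl fun i _ => hterm i, Finset.sum_add_distrib,
    Finset.sum_ite_eq' Finset.univ j0 (fun i => a^2 + 2*a*s*(w i)), ← Finset.mul_sum]
  simp only [Finset.mem_univ, if_true]

end aux

/-- Variance of X = ‖α e₁ + λ√(2/n)‖φ₊(z)‖ g‖² for z any random vector and
g an independent standard Gaussian vector. -/
theorem stmt_10 {Ω : Type*} [MeasureSpace Ω] [IsProbabilityMeasure (ℙ : Measure Ω)]
    (n : ℕ) (hn : 0 < n) (a l : ℝ)
    (z g : Ω → EuclideanSpace ℝ (Fin n)) (hz : Measurable z) (hg : Measurable g)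
    (hgauss : ∀ i, Measure.map (fun ω => g ω i) ℙ = gaussianReal 0 1)
    (hgindep : iIndepFun (fun i ω => g ω i) ℙ)
    (hzg : IndepFun z g ℙ)
    (hmom : ∀ p : ℕ, Integrable (fun ω => ‖relu (z ω)‖ ^ p) ℙ)
    (X : Ω → ℝ)
    (hX : X = fun ω => ‖a • EuclideanSpace.single (⟨0, hn⟩ : Fin n) (1 : ℝ)
      + (l * Real.sqrt (2 / n) * ‖relu (z ω)‖) • g ω‖ ^ 2) :
    variance X ℙ
      = l ^ 4 * (((n : ℝ) + 2) / n) * variance (fun ω => 2 * ‖relu (z ω)‖ ^ 2) ℙ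
        + 2 * l ^ 4 / n * (∫ ω, 2 * ‖relu (z ω)‖ ^ 2 ∂ℙ) ^ 2
        + 4 * a ^ 2 * l ^ 2 / n * ∫ ω, 2 * ‖relu (z ω)‖ ^ 2 ∂ℙ := by
  classical
  have hn' : ((n:ℝ)) ≠ 0 := Nat.cast_ne_zero.mpr hn.ne'
  set i0 : Fin n := ⟨0, hn⟩ with hi0
  set c : ℝ := l * Real.sqrt (2 / n) with hc
  set R : Ω → ℝ := fun ω => ‖relu (z ω)‖ with hRdef
  set G : Ω → ℝ := fun ω => g ω i0 with hGdef
  set S : Ω → ℝ := fun ω => ∑ i, (g ω i)^2 with hSdef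
  have hc2 : c^2 = l^2 * (2/(n:ℝ)) := by
    rw [hc, mul_pow, Real.sq_sqrt (by positivity)]
  -- measurability
  have hrelu : Measurable (relu (n := n)) :=
    (WithLp.measurable_toLp 2 _).comp (measurable_pi_lambda _ fun i =>
      ((measurable_pi_apply i).comp (WithLp.measurable_ofLp 2 _)).max measurable_const)
  have hRm : Measurable R := (hrelu.comp hz).norm
  have hgi : ∀ i : Fin n, Measurable fun ω => g ω i := fun i => (measurable_pi_apply i).comp ((WithLp.measurable_ofLp 2 _).comp hg)
  have hGm : Measurable G := hgi i0
  have hSm : Measurable S := Finset.measurable_sum _ fun i _ => (hgi i).pow_const 2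
  -- coordinate moments
  have intg : ∀ (i : Fin n) (k : ℕ), Integrable (fun ω => (g ω i)^k) ℙ := by
    intro i k
    have h2 : Integrable (fun x : ℝ => x^k) (Measure.map (fun ω => g ω i) ℙ) := by
      rw [hgauss i]; exact integrable_pow_gaussianReal k
    exact (integrable_map_measure (measurable_id'.pow_const k).aestronglyMeasurable
      (hgi i).aemeasurable).1 h2
  have momg : ∀ (i : Fin n) (k : ℕ),
      ∫ ω, (g ω i)^k ∂ℙ = ∫ x, x^k ∂(gaussianReal 0 1) := by
    intro i k
    rw [← hgauss i,
      integral_map (hgi i).aemeasurable (measurable_id'.pow_const k).aestronglyMeasurable]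
  have mg1 : ∀ i : Fin n, ∫ ω, (g ω i)^1 ∂ℙ = 0 := fun i => by rw [momg i 1, gauss_mom1]
  have mg2 : ∀ i : Fin n, ∫ ω, (g ω i)^2 ∂ℙ = 1 := fun i => by rw [momg i 2, gauss_mom2]
  have mg3 : ∀ i : Fin n, ∫ ω, (g ω i)^3 ∂ℙ = 0 := fun i => by rw [momg i 3, gauss_mom3]
  have mg4 : ∀ i : Fin n, ∫ ω, (g ω i)^4 ∂ℙ = 3 := fun i => by rw [momg i 4, gauss_mom4]
  -- cross moments
  have hcross : ∀ (i j : Fin n), i ≠ j → ∀ p q : ℕ,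
      Integrable (fun ω => (g ω i)^p * (g ω j)^q) ℙ ∧
      ∫ ω, (g ω i)^p * (g ω j)^q ∂ℙ
        = (∫ ω, (g ω i)^p ∂ℙ) * ∫ ω, (g ω j)^q ∂ℙ := by
    intro i j hij p q
    have hind : IndepFun (fun ω => (g ω i)^p) (fun ω => (g ω j)^q) ℙ :=
      (hgindep.indepFun hij).comp (measurable_id.pow_const p) (measurable_id.pow_const q)
    exact ⟨hind.integrable_mul (intg i p) (intg j q),
      hind.integral_mul_eq_mul_integral (intg i p).1 (intg j q).1⟩
  -- statistics of g
  have intS : Integrable S ℙ := integrable_finset_sum _ fun i _ => intg i 2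
  have ES : ∫ ω, S ω ∂ℙ = (n:ℝ) := by
    rw [hSdef, integral_finset_sum _ fun i _ => intg i 2]
    simp [mg2]
  have intG2 : Integrable (fun ω => G ω^2) ℙ := intg i0 2
  have EG2 : ∫ ω, G ω^2 ∂ℙ = 1 := mg2 i0
  have hGS : ∀ ω, G ω * S ω = ∑ i, g ω i0 * (g ω i)^2 := fun ω => Finset.mul_sum _ _ _
  have intGSterm : ∀ i : Fin n, Integrable (fun ω => g ω i0 * (g ω i)^2) ℙ := by
    intro i
    by_cases hij : i0 = i
    · subst hij
      have h := intg i0 3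
      apply h.congr
      filter_upwards with ω; ring
    · have h := (hcross i0 i hij 1 2).1
      simpa [pow_one] using h
  have intGS : Integrable (fun ω => G ω * S ω) ℙ := by
    have h := integrable_finset_sum (μ := (ℙ : Measure Ω)) Finset.univ
      (f := fun i ω => g ω i0 * (g ω i)^2) (fun i _ => intGSterm i)
    apply h.congr
    filter_upwards with ω
    rw [← hGS]
  have EGS : ∫ ω, G ω * S ω ∂ℙ = 0 := by
    rw [show (fun ω => G ω * S ω) = fun ω => ∑ i, g ω i0 * (g ω i)^2 from funext hGS,
      integral_finset_sum _ fun i _ => intGSterm i]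
    apply Finset.sum_eq_zero
    intro i _
    by_cases hij : i0 = i
    · subst hij
      rw [show (fun ω => g ω i0 * (g ω i0)^2) = fun ω => (g ω i0)^3 from
        funext fun ω => by ring, mg3 i0]
    · have h := (hcross i0 i hij 1 2).2
      rw [mg1 i0, zero_mul] at h
      simpa [pow_one] using h
  have hS2 : ∀ ω, S ω^2 = ∑ i, ∑ j, (g ω i)^2 * (g ω j)^2 := by
    intro ω
    rw [hSdef, sq, Finset.sum_mul_sum]
  have intS2term : ∀ i j : Fin n, Integrable (fun ω => (g ω i)^2 * (g ω j)^2) ℙ := by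
    intro i j
    by_cases hij : i = j
    · subst hij
      have h := intg i 4
      apply h.congr
      filter_upwards with ω; ring
    · exact (hcross i j hij 2 2).1
  have intS2 : Integrable (fun ω => S ω^2) ℙ := by
    have h := integrable_finset_sum (μ := (ℙ : Measure Ω)) Finset.univ
      (f := fun i ω => ∑ j, (g ω i)^2 * (g ω j)^2)
      (fun i _ => integrable_finset_sum _ fun j _ => intS2term i j)
    apply h.congr
    filter_upwards with ω
    rw [← hS2]
  have ES2 : ∫ ω, S ω^2 ∂ℙ = (n:ℝ) * ((n:ℝ) + 2) := by
    rw [show (fun ω => S ω^2) = fun ω => ∑ i, ∑ j, (g ω i)^2 * (g ω j)^2 from funext hS2,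
      integral_finset_sum _ fun i _ => integrable_finset_sum _ fun j _ => intS2term i j]
    have hval : ∀ i : Fin n, ∑ j : Fin n, (∫ ω, (g ω i)^2 * (g ω j)^2 ∂ℙ) = (n:ℝ) + 2 := by
      intro i
      have : ∀ j : Fin n, (∫ ω, (g ω i)^2 * (g ω j)^2 ∂ℙ)
          = (if j = i then (2:ℝ) else 0) + 1 := by
        intro j
        by_cases hij : j = i
        · subst hij
          rw [show (fun ω => (g ω j)^2 * (g ω j)^2) = fun ω => (g ω j)^4 from
            funext fun ω => by ring, mg4 j]
          norm_num
        · rw [(hcross i j (fun h => hij h.symm) 2 2).2, mg2 i, mg2 j]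
          simp [hij]
      rw [Finset.sum_congr rfl fun j _ => this j, Finset.sum_add_distrib,
        Finset.sum_ite_eq' Finset.univ i (fun _ => (2:ℝ))]
      simp [Finset.card_univ]
      ring
    rw [Finset.sum_congr rfl fun i _ => by
      rw [integral_finset_sum _ fun j _ => intS2term i j, hval i]]
    simp [Finset.card_univ]
    ring
  -- independence of R-powers from g-statistics
  have hzΦ : ∀ (p : ℕ) (Φ : EuclideanSpace ℝ (Fin n) → ℝ), Measurable Φ →
      Integrable (fun ω => Φ (g ω)) ℙ →
      Integrable (fun ω => R ω ^ p * Φ (g ω)) ℙ ∧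
      ∫ ω, R ω ^ p * Φ (g ω) ∂ℙ = (∫ ω, R ω ^ p ∂ℙ) * ∫ ω, Φ (g ω) ∂ℙ := by
    intro p Φ hΦ hint
    have hind : IndepFun (fun ω => R ω ^ p) (fun ω => Φ (g ω)) ℙ :=
      hzg.comp ((hrelu.norm).pow_const p) hΦ
    exact ⟨hind.integrable_mul (hmom p) hint,
      hind.integral_mul_eq_mul_integral (hmom p).1 hint.1⟩
  have hT1 := hzΦ 1 (fun v => v i0) ((measurable_pi_apply i0).comp (WithLp.measurable_ofLp 2 _)) (by
    have h := intg i0 1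
    simpa [pow_one] using h)
  have hT2 := hzΦ 2 (fun v => ∑ i, (v i)^2)
    (Finset.measurable_sum _ fun i _ => ((measurable_pi_apply i).comp (WithLp.measurable_ofLp 2 _)).pow_const 2) intS
  have hT3 := hzΦ 2 (fun v => (v i0)^2) (((measurable_pi_apply i0).comp (WithLp.measurable_ofLp 2 _)).pow_const 2) intG2
  have hT4 := hzΦ 3 (fun v => v i0 * ∑ i, (v i)^2)
    (((measurable_pi_apply i0).comp (WithLp.measurable_ofLp 2 _)).mul
      (Finset.measurable_sum _ fun i _ => ((measurable_pi_apply i).comp (WithLp.measurable_ofLp 2 _)).pow_const 2)) intGS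
  have hT5 := hzΦ 4 (fun v => (∑ i, (v i)^2)^2)
    ((Finset.measurable_sum _ fun i _ => ((measurable_pi_apply i).comp (WithLp.measurable_ofLp 2 _)).pow_const 2).pow_const 2) intS2
  set A : ℝ := ∫ ω, R ω ^ 2 ∂ℙ with hA
  set B : ℝ := ∫ ω, R ω ^ 4 ∂ℙ with hB
  have EG : ∫ ω, G ω ∂ℙ = 0 := by
    have h := mg1 i0
    simpa [pow_one] using h
  have ET1 : ∫ ω, R ω ^ 1 * G ω ∂ℙ = 0 := by rw [hT1.2, EG, mul_zero]
  have ET2 : ∫ ω, R ω ^ 2 * S ω ∂ℙ = A * (n:ℝ) := by rw [hT2.2, ES]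
  have ET3 : ∫ ω, R ω ^ 2 * G ω ^ 2 ∂ℙ = A := by rw [hT3.2, EG2, mul_one]
  have ET4 : ∫ ω, R ω ^ 3 * (G ω * S ω) ∂ℙ = 0 := by rw [hT4.2, EGS, mul_zero]
  have ET5 : ∫ ω, R ω ^ 4 * S ω ^ 2 ∂ℙ = B * ((n:ℝ) * ((n:ℝ) + 2)) := by rw [hT5.2, ES2]
  -- expansion of X
  have hXeq : X = fun ω => a^2 + (2*a*c) * (R ω ^ 1 * G ω) + c^2 * (R ω ^ 2 * S ω) := by
    funext ω
    simp only [hX, hRdef, hGdef, hSdef]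
    rw [expand_sq a (c * ‖relu (z ω)‖) i0 (g ω)]
    ring
  -- integrability pieces
  have intT1 := hT1.1
  have intT2 := hT2.1
  have intT3 := hT3.1
  have intT4 := hT4.1
  have intT5 := hT5.1
  have intX : Integrable X ℙ := by
    rw [hXeq]
    exact ((integrable_const (a^2)).add (intT1.const_mul _)).add (intT2.const_mul _)
  have EX : ∫ ω, X ω ∂ℙ = a^2 + c^2 * (A * (n:ℝ)) := by
    have s1 : ∫ ω, ((a^2 + (2*a*c) * (R ω ^ 1 * G ω)) + c^2 * (R ω ^ 2 * S ω)) ∂ℙ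
        = (∫ ω, (a^2 + (2*a*c) * (R ω ^ 1 * G ω)) ∂ℙ) + ∫ ω, c^2 * (R ω ^ 2 * S ω) ∂ℙ :=
      integral_add ((integrable_const (a^2)).add (intT1.const_mul _)) (intT2.const_mul _)
    have s2 : ∫ ω, (a^2 + (2*a*c) * (R ω ^ 1 * G ω)) ∂ℙ
        = (∫ ω, (a^2 : ℝ) ∂ℙ) + ∫ ω, (2*a*c) * (R ω ^ 1 * G ω) ∂ℙ :=
      integral_add (integrable_const (a^2)) (intT1.const_mul _)
    simp only [hXeq]
    rw [s1, s2, integral_const, integral_const_mul, integral_const_mul, ET1, ET2]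
    simp
  have hX2eq : (fun ω => X ω^2) = fun ω =>
      a^4 + (4*a^3*c) * (R ω ^ 1 * G ω) + (2*a^2*c^2) * (R ω ^ 2 * S ω)
        + (4*a^2*c^2) * (R ω ^ 2 * G ω ^ 2) + (4*a*c^3) * (R ω ^ 3 * (G ω * S ω))
        + c^4 * (R ω ^ 4 * S ω ^ 2) := by
    funext ω
    simp only [hXeq]
    ring
  have intX2 : Integrable (fun ω => X ω^2) ℙ := by
    rw [hX2eq]
    exact (((((integrable_const (a^4)).add (intT1.const_mul _)).add
      (intT2.const_mul _)).add (intT3.const_mul _)).add (intT4.const_mul _)).add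
      (intT5.const_mul _)
  have EX2 : ∫ ω, X ω^2 ∂ℙ
      = a^4 + (2*a^2*c^2) * (A * (n:ℝ)) + (4*a^2*c^2) * A
        + c^4 * (B * ((n:ℝ) * ((n:ℝ) + 2))) := by
    have i1 : Integrable (fun ω => (a^4 : ℝ) + (4*a^3*c) * (R ω ^ 1 * G ω)) ℙ :=
      (integrable_const (a^4)).add (intT1.const_mul _)
    have i2 : Integrable (fun ω => ((a^4 : ℝ) + (4*a^3*c) * (R ω ^ 1 * G ω))
        + (2*a^2*c^2) * (R ω ^ 2 * S ω)) ℙ := i1.add (intT2.const_mul _)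
    have i3 : Integrable (fun ω => (((a^4 : ℝ) + (4*a^3*c) * (R ω ^ 1 * G ω))
        + (2*a^2*c^2) * (R ω ^ 2 * S ω)) + (4*a^2*c^2) * (R ω ^ 2 * G ω ^ 2)) ℙ :=
      i2.add (intT3.const_mul _)
    have i4 : Integrable (fun ω => ((((a^4 : ℝ) + (4*a^3*c) * (R ω ^ 1 * G ω))
        + (2*a^2*c^2) * (R ω ^ 2 * S ω)) + (4*a^2*c^2) * (R ω ^ 2 * G ω ^ 2))
        + (4*a*c^3) * (R ω ^ 3 * (G ω * S ω))) ℙ := i3.add (intT4.const_mul _)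
    have s5 : ∫ ω, (((((a^4 : ℝ) + (4*a^3*c) * (R ω ^ 1 * G ω))
        + (2*a^2*c^2) * (R ω ^ 2 * S ω)) + (4*a^2*c^2) * (R ω ^ 2 * G ω ^ 2))
        + (4*a*c^3) * (R ω ^ 3 * (G ω * S ω))) + c^4 * (R ω ^ 4 * S ω ^ 2) ∂ℙ
        = (∫ ω, ((((a^4 : ℝ) + (4*a^3*c) * (R ω ^ 1 * G ω))
        + (2*a^2*c^2) * (R ω ^ 2 * S ω)) + (4*a^2*c^2) * (R ω ^ 2 * G ω ^ 2))
        + (4*a*c^3) * (R ω ^ 3 * (G ω * S ω)) ∂ℙ) + ∫ ω, c^4 * (R ω ^ 4 * S ω ^ 2) ∂ℙ :=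
      integral_add i4 (intT5.const_mul _)
    have s4 : ∫ ω, ((((a^4 : ℝ) + (4*a^3*c) * (R ω ^ 1 * G ω))
        + (2*a^2*c^2) * (R ω ^ 2 * S ω)) + (4*a^2*c^2) * (R ω ^ 2 * G ω ^ 2))
        + (4*a*c^3) * (R ω ^ 3 * (G ω * S ω)) ∂ℙ
        = (∫ ω, (((a^4 : ℝ) + (4*a^3*c) * (R ω ^ 1 * G ω))
        + (2*a^2*c^2) * (R ω ^ 2 * S ω)) + (4*a^2*c^2) * (R ω ^ 2 * G ω ^ 2) ∂ℙ)
          + ∫ ω, (4*a*c^3) * (R ω ^ 3 * (G ω * S ω)) ∂ℙ :=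
      integral_add i3 (intT4.const_mul _)
    have s3 : ∫ ω, (((a^4 : ℝ) + (4*a^3*c) * (R ω ^ 1 * G ω))
        + (2*a^2*c^2) * (R ω ^ 2 * S ω)) + (4*a^2*c^2) * (R ω ^ 2 * G ω ^ 2) ∂ℙ
        = (∫ ω, ((a^4 : ℝ) + (4*a^3*c) * (R ω ^ 1 * G ω))
        + (2*a^2*c^2) * (R ω ^ 2 * S ω) ∂ℙ) + ∫ ω, (4*a^2*c^2) * (R ω ^ 2 * G ω ^ 2) ∂ℙ :=
      integral_add i2 (intT3.const_mul _)
    have s2 : ∫ ω, ((a^4 : ℝ) + (4*a^3*c) * (R ω ^ 1 * G ω))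
        + (2*a^2*c^2) * (R ω ^ 2 * S ω) ∂ℙ
        = (∫ ω, ((a^4 : ℝ) + (4*a^3*c) * (R ω ^ 1 * G ω)) ∂ℙ)
          + ∫ ω, (2*a^2*c^2) * (R ω ^ 2 * S ω) ∂ℙ :=
      integral_add i1 (intT2.const_mul _)
    have s1 : ∫ ω, ((a^4 : ℝ) + (4*a^3*c) * (R ω ^ 1 * G ω)) ∂ℙ
        = (∫ ω, (a^4 : ℝ) ∂ℙ) + ∫ ω, (4*a^3*c) * (R ω ^ 1 * G ω) ∂ℙ :=
      integral_add (integrable_const (a^4)) (intT1.const_mul _)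
    simp only [hX2eq]
    rw [s5, s4, s3, s2, s1, integral_const, integral_const_mul, integral_const_mul,
      integral_const_mul, integral_const_mul, integral_const_mul, ET1, ET2, ET3, ET4, ET5]
    simp
    try ring
  -- variance of X
  -- variance of X
  have hXmeas : AEStronglyMeasurable X ℙ := by
    rw [hXeq]
    exact ((measurable_const.add (((hRm.pow_const 1).mul hGm).const_mul _)).add
      (((hRm.pow_const 2).mul hSm).const_mul _)).aestronglyMeasurable
  have memX : MemLp X 2 ℙ := (memLp_two_iff_integrable_sq hXmeas).2 intX2
  have hvarX : variance X ℙ = ∫ ω, X ω^2 ∂ℙ - (∫ ω, X ω ∂ℙ)^2 := by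
    rw [variance_eq_sub memX]
    congr 1
  -- variance of 2R²
  have int2R2 : Integrable (fun ω => 2 * R ω^2) ℙ := (hmom 2).const_mul 2
  have int2R2sq : Integrable (fun ω => (2 * R ω^2)^2) ℙ := by
    have h := (hmom 4).const_mul 4
    apply h.congr
    filter_upwards with ω; ring
  have mem2R2 : MemLp (fun ω => 2 * R ω^2) 2 ℙ :=
    (memLp_two_iff_integrable_sq
      ((hRm.pow_const 2).const_mul 2).aestronglyMeasurable).2 int2R2sq
  have E2R2 : ∫ ω, 2 * R ω^2 ∂ℙ = 2 * A := integral_const_mul 2 _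
  have hvar2 : variance (fun ω => 2 * R ω^2) ℙ = 4 * B - (2*A)^2 := by
    rw [variance_eq_sub mem2R2]
    have h1 : (ℙ : Measure Ω)[(fun ω => 2 * R ω^2)^2] = 4 * B := by
      have : ((fun ω => 2 * R ω^2)^2 : Ω → ℝ) = fun ω => 4 * R ω^4 :=
        funext fun ω => by simp [Pi.pow_apply]; ring
      rw [this, integral_const_mul]
    have h2 : (ℙ : Measure Ω)[fun ω => 2 * R ω^2] = 2 * A := E2R2
    rw [h1, h2]
  -- final computation
  have hc4 : c^4 = (l^2 * (2/(n:ℝ)))^2 := by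
    rw [show c^4 = (c^2)^2 by ring, hc2]
  rw [hvarX, EX2, EX, hvar2, E2R2, hc4, hc2]
  field_simp
  ring
end

section
/- Let Z, W be independent N(0,1) random variables and θ ∈ [0,π]. Then 2·E[φ₊(Z)² φ₊(cos(θ)Z + sin(θ)W)²] = (3 sin(θ)cos(θ) + (π−θ)(1 + 2cos²(θ)))/π. -/
open MeasureTheory Real Filter

lemma radial_deriv (x : ℝ) : HasDerivAt (fun x : ℝ => -(x^4+4*x^2+8) * rexp (-x^2/2))
      (x^5 * rexp (-x^2/2)) x := by
  have h1 : HasDerivAt (fun x : ℝ => -x^2/2) (-x) x := by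
    have h := ((hasDerivAt_pow 2 x).neg.div_const 2)
    refine h.congr_deriv ?_; push_cast; ring
  have h2 : HasDerivAt (fun x : ℝ => rexp (-x^2/2)) (rexp (-x^2/2) * (-x)) x :=
    (Real.hasDerivAt_exp _).comp x h1
  have h3 : HasDerivAt (fun x : ℝ => -(x^4+4*x^2+8)) (-(4*x^3+8*x)) x := by
    have h := (((hasDerivAt_pow 4 x).add ((hasDerivAt_pow 2 x).const_mul 4)).add_const 8).neg
    refine h.congr_deriv ?_; push_cast; ring
  have h := h3.mul h2
  refine h.congr_deriv ?_
  ring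

lemma radial_int : ∫ x in Set.Ioi (0:ℝ), x^5 * rexp (-x^2/2) = 8 := by
  have hint : IntegrableOn (fun x : ℝ => x^5 * rexp (-x^2/2)) (Set.Ioi 0) := by
    have h := integrableOn_rpow_mul_exp_neg_mul_sq (b := (1:ℝ)/2) (by norm_num) (s := 5) (by norm_num)
    refine h.congr_fun (fun x hx => ?_) measurableSet_Ioi
    beta_reduce
    rw [show ((5:ℝ)) = ((5:ℕ):ℝ) by norm_num, rpow_natCast]
    norm_num; left; ring_nf
  have htend : Tendsto (fun x : ℝ => -(x^4+4*x^2+8) * rexp (-x^2/2)) atTop (nhds 0) := by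
    have hg : Tendsto (fun u : ℝ => (4*u^2+8*u+8) * rexp (-u)) atTop (nhds 0) := by
      have h2 := (tendsto_pow_mul_exp_neg_atTop_nhds_zero 2).const_mul 4
      have h1 := (tendsto_pow_mul_exp_neg_atTop_nhds_zero 1).const_mul 8
      have h0 := (tendsto_pow_mul_exp_neg_atTop_nhds_zero 0).const_mul 8
      have h := (h2.add h1).add h0
      simp only [mul_zero, add_zero] at h
      refine h.congr (fun u => by ring_nf)
    have hx2 : Tendsto (fun x : ℝ => x^2/2) atTop atTop :=
      (tendsto_pow_atTop (two_ne_zero)).atTop_div_const (by norm_num)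
    have h := (hg.comp hx2).neg
    rw [neg_zero] at h
    refine h.congr (fun x => ?_)
    simp only [Function.comp]
    ring_nf
  have h := integral_Ioi_of_hasDerivAt_of_tendsto
    (radial_deriv 0).continuousAt.continuousWithinAt (fun x _ => radial_deriv x) hint htend
  rw [h]; norm_num
open MeasureTheory Real Filter intervalIntegral

noncomputable def Fang (θ x : ℝ) : ℝ :=
  (x*(2+Real.cos (2*θ)) + Real.sin (2*x) + Real.sin (2*x-2*θ) + Real.sin (4*x-2*θ)/4)/8

lemma Fang_deriv (θ x : ℝ) : HasDerivAt (Fang θ) (Real.cos x ^ 2 * Real.cos (x-θ) ^ 2) x := by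
  have hlin : ∀ a b : ℝ, HasDerivAt (fun x : ℝ => a*x+b) a x := by
    intro a b
    simpa using ((hasDerivAt_id x).const_mul a).add_const b
  have h1 : HasDerivAt (fun x : ℝ => Real.sin (2*x)) (Real.cos (2*x) * 2) x :=
    (Real.hasDerivAt_sin (2*x)).comp x (by simpa using hlin 2 0)
  have h2 : HasDerivAt (fun x : ℝ => Real.sin (2*x-2*θ)) (Real.cos (2*x-2*θ) * 2) x :=
    ((Real.hasDerivAt_sin (2*x-2*θ)).comp x (by simpa [sub_eq_add_neg] using hlin 2 (-(2*θ)) : HasDerivAt (fun x : ℝ => 2*x-2*θ) 2 x) :)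
  have h3 : HasDerivAt (fun x : ℝ => Real.sin (4*x-2*θ)) (Real.cos (4*x-2*θ) * 4) x :=
    ((Real.hasDerivAt_sin (4*x-2*θ)).comp x (by simpa [sub_eq_add_neg] using hlin 4 (-(2*θ)) : HasDerivAt (fun x : ℝ => 4*x-2*θ) 4 x) :)
  have h0 : HasDerivAt (fun x : ℝ => x*(2+Real.cos (2*θ))) (2+Real.cos (2*θ)) x := by
    simpa [mul_comm] using hlin (2+Real.cos (2*θ)) 0
  have h := (((h0.add h1).add h2).add (h3.div_const 4)).div_const 8
  have e : (2 + Real.cos (2*θ) + Real.cos (2*x) * 2 + Real.cos (2*x-2*θ) * 2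
      + Real.cos (4*x-2*θ) * 4 / 4) / 8 = Real.cos x ^ 2 * Real.cos (x-θ) ^ 2 := by
    rw [show 2*θ = 2*x - 2*(x-θ) by ring, show 2*x - (2*x - 2*(x-θ)) = 2*(x-θ) by ring,
      show 4*x - (2*x - 2*(x-θ)) = 2*x + 2*(x-θ) by ring,
      Real.cos_sub, Real.cos_add, Real.cos_two_mul x, Real.cos_two_mul (x-θ),
      Real.sin_two_mul, Real.sin_two_mul]
    ring
  rw [← e]
  exact h

lemma angular_cont (θ : ℝ) : Continuous (fun x : ℝ => max (Real.cos x) 0 ^ 2 * max (Real.cos (x-θ)) 0 ^ 2) := by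
  fun_prop

lemma angular_int (θ : ℝ) (h0 : 0 ≤ θ) (h1 : θ ≤ π) :
    ∫ x in Set.Ioo (-π) π, max (Real.cos x) 0 ^ 2 * max (Real.cos (x-θ)) 0 ^ 2
      = (3 * Real.sin θ * Real.cos θ + (π - θ) * (1 + 2 * Real.cos θ ^ 2)) / 8 := by
  have hpi := Real.pi_pos
  have hab : -π ≤ θ - π/2 := by linarith
  have hbc : θ - π/2 ≤ π/2 := by linarith
  have hcd : (π/2 : ℝ) ≤ π := by linarith
  set f : ℝ → ℝ := fun x => max (Real.cos x) 0 ^ 2 * max (Real.cos (x-θ)) 0 ^ 2 with hf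
  have hfi : ∀ a b : ℝ, IntervalIntegrable f volume a b :=
    fun a b => (angular_cont θ).intervalIntegrable a b
  have key : ∫ x in Set.Ioo (-π) π, f x = (∫ x in (-π)..(θ-π/2), f x)
      + (∫ x in (θ-π/2)..(π/2), f x) + (∫ x in (π/2)..π, f x) := by
    rw [← integral_Ioc_eq_integral_Ioo, ← intervalIntegral.integral_of_le (by linarith),
      intervalIntegral.integral_add_adjacent_intervals (hfi _ _) (hfi _ _),
      intervalIntegral.integral_add_adjacent_intervals (hfi _ _) (hfi _ _)]
  have hzero1 : (∫ x in (-π)..(θ-π/2), f x) = 0 := by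
    rw [intervalIntegral.integral_congr (g := fun _ => (0:ℝ)) ?_, intervalIntegral.integral_const]
    · simp
    · intro x hx
      rw [Set.uIcc_of_le hab] at hx
      obtain ⟨hx1, hx2⟩ := hx
      by_cases hc : x ≤ -π/2
      · have : Real.cos x ≤ 0 := by
          rw [← Real.cos_neg]
          exact Real.cos_nonpos_of_pi_div_two_le_of_le (by linarith) (by linarith)
        simp [hf, max_eq_right this]
      · have : Real.cos (x - θ) ≤ 0 := by
          rw [← Real.cos_neg, neg_sub]
          exact Real.cos_nonpos_of_pi_div_two_le_of_le (by linarith) (by linarith)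
        simp [hf, max_eq_right this]
  have hzero2 : (∫ x in (π/2)..π, f x) = 0 := by
    rw [intervalIntegral.integral_congr (g := fun _ => (0:ℝ)) ?_, intervalIntegral.integral_const]
    · simp
    · intro x hx
      rw [Set.uIcc_of_le hcd] at hx
      obtain ⟨hx1, hx2⟩ := hx
      have : Real.cos x ≤ 0 := Real.cos_nonpos_of_pi_div_two_le_of_le (by linarith) (by linarith)
      simp [hf, max_eq_right this]
  have hmid : (∫ x in (θ-π/2)..(π/2), f x)
      = (3 * Real.sin θ * Real.cos θ + (π - θ) * (1 + 2 * Real.cos θ ^ 2)) / 8 := by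
    have hcong : (∫ x in (θ-π/2)..(π/2), f x)
        = ∫ x in (θ-π/2)..(π/2), Real.cos x ^ 2 * Real.cos (x-θ) ^ 2 := by
      refine intervalIntegral.integral_congr (fun x hx => ?_)
      rw [Set.uIcc_of_le hbc] at hx
      obtain ⟨hx1, hx2⟩ := hx
      have hc1 : 0 ≤ Real.cos x := Real.cos_nonneg_of_mem_Icc ⟨by linarith, by linarith⟩
      have hc2 : 0 ≤ Real.cos (x-θ) := Real.cos_nonneg_of_mem_Icc ⟨by linarith, by linarith⟩
      simp [hf, max_eq_left hc1, max_eq_left hc2]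
    rw [hcong, intervalIntegral.integral_eq_sub_of_hasDerivAt (fun x _ => Fang_deriv θ x)
      (((Real.continuous_cos.pow 2).mul (((Real.continuous_cos.comp (continuous_id.sub continuous_const))).pow 2)).intervalIntegrable _ _)]
    have s1 : Real.sin (2*(π/2)) = 0 := by rw [show 2*(π/2) = π by ring, Real.sin_pi]
    have s2 : Real.sin (2*(π/2)-2*θ) = 2 * Real.sin θ * Real.cos θ := by
      rw [show 2*(π/2)-2*θ = π - 2*θ by ring, Real.sin_pi_sub, Real.sin_two_mul]
    have s3 : Real.sin (4*(π/2)-2*θ) = -(2 * Real.sin θ * Real.cos θ) := by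
      rw [show 4*(π/2)-2*θ = -(2*θ)+2*π by ring, Real.sin_add_two_pi, Real.sin_neg, Real.sin_two_mul]
    have s4 : Real.sin (2*(θ-π/2)) = -(2 * Real.sin θ * Real.cos θ) := by
      rw [show 2*(θ-π/2) = -(π - 2*θ) by ring, Real.sin_neg, Real.sin_pi_sub, Real.sin_two_mul]
    have s5 : Real.sin (2*(θ-π/2)-2*θ) = 0 := by
      rw [show 2*(θ-π/2)-2*θ = -π by ring, Real.sin_neg, Real.sin_pi, neg_zero]
    have s6 : Real.sin (4*(θ-π/2)-2*θ) = 2 * Real.sin θ * Real.cos θ := by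
      rw [show 4*(θ-π/2)-2*θ = 2*θ-2*π by ring, Real.sin_sub_two_pi, Real.sin_two_mul]
    have c1 : Real.cos (2*θ) = 2*Real.cos θ^2 - 1 := Real.cos_two_mul θ
    simp only [Fang, s1, s2, s3, s4, s5, s6, c1]
    ring
  rw [key, hzero1, hzero2, hmid]
  ring
open MeasureTheory ProbabilityTheory Real

noncomputable def gd (x : ℝ) : NNReal := (ProbabilityTheory.gaussianPDFReal 0 1 x).toNNReal

lemma gd_coe (x : ℝ) : ((gd x : NNReal) : ℝ) = gaussianPDFReal 0 1 x :=
  Real.coe_toNNReal _ (gaussianPDFReal_nonneg 0 1 x)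

lemma gd_meas : Measurable gd := (measurable_gaussianPDFReal 0 1).real_toNNReal

lemma gauss_eq_wd : gaussianReal 0 1 = volume.withDensity (fun x => ((gd x : NNReal) : ENNReal)) := by
  rw [gaussianReal_of_var_ne_zero 0 one_ne_zero]
  rfl

lemma gauss_prod : (gaussianReal 0 1).prod (gaussianReal 0 1)
    = (volume.prod volume).withDensity (fun p => ((gd p.1 * gd p.2 : NNReal) : ENNReal)) := by
  refine Measure.prod_eq fun s t hs ht => ?_
  rw [withDensity_apply _ (hs.prod ht), ← Measure.prod_restrict,
    gauss_eq_wd, withDensity_apply _ hs, withDensity_apply _ ht]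
  simp_rw [ENNReal.coe_mul]
  rw [lintegral_prod_mul (gd_meas.coe_nnreal_ennreal.aemeasurable)
    (gd_meas.coe_nnreal_ennreal.aemeasurable)]

/-- The arc-cosine kernel identity of Cho–Saul: for independent Z, W ~ N(0,1) and θ ∈ [0,π],
2 E[φ₊(Z)² φ₊(cos θ Z + sin θ W)²] = (3 sin θ cos θ + (π−θ)(1+2cos²θ))/π. -/
theorem stmt_13 {Ω : Type*} [MeasureSpace Ω] [IsProbabilityMeasure (ℙ : Measure Ω)]
    (Z W : Ω → ℝ) (hZm : Measurable Z) (hWm : Measurable W)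
    (hZ : Measure.map Z ℙ = gaussianReal 0 1)
    (hW : Measure.map W ℙ = gaussianReal 0 1)
    (hZW : IndepFun Z W ℙ)
    (θ : ℝ) (hθ : θ ∈ Set.Icc 0 π) :
    2 * ∫ ω, max (Z ω) 0 ^ 2 * max (Real.cos θ * Z ω + Real.sin θ * W ω) 0 ^ 2 ∂ℙ
      = (3 * Real.sin θ * Real.cos θ + (π - θ) * (1 + 2 * Real.cos θ ^ 2)) / π := by
  obtain ⟨hθ0, hθ1⟩ := hθ
  have hpi := Real.pi_pos
  set F : ℝ × ℝ → ℝ :=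
    fun p => max p.1 0 ^ 2 * max (Real.cos θ * p.1 + Real.sin θ * p.2) 0 ^ 2 with hF
  have hFc : Continuous F := by fun_prop
  have hmap : Measure.map (fun ω => (Z ω, W ω)) ℙ = (gaussianReal 0 1).prod (gaussianReal 0 1) := by
    rw [(indepFun_iff_map_prod_eq_prod_map_map hZm.aemeasurable hWm.aemeasurable).mp hZW, hZ, hW]
  have step1 : ∫ ω, max (Z ω) 0 ^ 2 * max (Real.cos θ * Z ω + Real.sin θ * W ω) 0 ^ 2 ∂ℙ
      = ∫ p, F p ∂((gaussianReal 0 1).prod (gaussianReal 0 1)) := by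
    rw [← hmap, integral_map (hZm.prodMk hWm).aemeasurable hFc.aestronglyMeasurable]
  have step2 : ∫ p, F p ∂((gaussianReal 0 1).prod (gaussianReal 0 1))
      = ∫ p : ℝ × ℝ, (gaussianPDFReal 0 1 p.1 * gaussianPDFReal 0 1 p.2) * F p := by
    rw [gauss_prod, integral_withDensity_eq_integral_smul (f := fun p : ℝ × ℝ => gd p.1 * gd p.2) (by exact (gd_meas.comp measurable_fst).mul (gd_meas.comp measurable_snd)) F,
      Measure.volume_eq_prod]
    congr 1
    ext p
    rw [NNReal.smul_def, smul_eq_mul, NNReal.coe_mul, gd_coe, gd_coe]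
  have step3 : ∫ p : ℝ × ℝ, (gaussianPDFReal 0 1 p.1 * gaussianPDFReal 0 1 p.2) * F p
      = ∫ p in polarCoord.target,
          p.1 • ((gaussianPDFReal 0 1 (polarCoord.symm p).1 * gaussianPDFReal 0 1 (polarCoord.symm p).2)
            * F (polarCoord.symm p)) :=
    (integral_comp_polarCoord_symm _).symm
  have step4 : ∫ p in polarCoord.target,
          p.1 • ((gaussianPDFReal 0 1 (polarCoord.symm p).1 * gaussianPDFReal 0 1 (polarCoord.symm p).2)
            * F (polarCoord.symm p))
      = ∫ p in Set.Ioi (0:ℝ) ×ˢ Set.Ioo (-π) π,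
          (p.1 ^ 5 * Real.exp (-p.1 ^ 2 / 2)) *
            ((2 * π)⁻¹ * (max (Real.cos p.2) 0 ^ 2 * max (Real.cos (p.2 - θ)) 0 ^ 2)) := by
    rw [polarCoord_target]
    refine setIntegral_congr_fun (measurableSet_Ioi.prod measurableSet_Ioo) fun p hp => ?_
    obtain ⟨hr, -⟩ := hp
    have hr0 : (0:ℝ) ≤ p.1 := le_of_lt hr
    rw [Set.mem_Ioi] at hr
    rw [polarCoord_symm_apply]
    have hg : gaussianPDFReal 0 1 (p.1 * Real.cos p.2) * gaussianPDFReal 0 1 (p.1 * Real.sin p.2)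
        = (2 * π)⁻¹ * Real.exp (-p.1 ^ 2 / 2) := by
      simp only [gaussianPDFReal]
      push_cast
      rw [mul_mul_mul_comm, show (2*π*1 : ℝ) = 2*π by ring, ← mul_inv,
        Real.mul_self_sqrt (by positivity : (0:ℝ) ≤ 2*π), ← Real.exp_add]
      congr 1
      exact congrArg rexp (by nlinarith [Real.sin_sq_add_cos_sq p.2])
    have hmax1 : max (p.1 * Real.cos p.2) 0 = p.1 * max (Real.cos p.2) 0 := by
      rw [mul_max_of_nonneg _ _ hr0, mul_zero]
    have hmax2 : Real.cos θ * (p.1 * Real.cos p.2) + Real.sin θ * (p.1 * Real.sin p.2)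
        = p.1 * Real.cos (p.2 - θ) := by rw [Real.cos_sub]; ring
    have hmax3 : max (p.1 * Real.cos (p.2 - θ)) 0 = p.1 * max (Real.cos (p.2 - θ)) 0 := by
      rw [mul_max_of_nonneg _ _ hr0, mul_zero]
    rw [hF]
    simp only [smul_eq_mul]
    rw [hg, hmax2, hmax1, hmax3]
    ring
  have step5 : ∫ p in Set.Ioi (0:ℝ) ×ˢ Set.Ioo (-π) π,
          (p.1 ^ 5 * Real.exp (-p.1 ^ 2 / 2)) *
            ((2 * π)⁻¹ * (max (Real.cos p.2) 0 ^ 2 * max (Real.cos (p.2 - θ)) 0 ^ 2))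
      = (∫ x in Set.Ioi (0:ℝ), x ^ 5 * Real.exp (-x ^ 2 / 2)) *
        ((2 * π)⁻¹ * ∫ x in Set.Ioo (-π) π, max (Real.cos x) 0 ^ 2 * max (Real.cos (x - θ)) 0 ^ 2) := by
    rw [Measure.volume_eq_prod, ← Measure.prod_restrict,
      integral_prod_mul (μ := volume.restrict (Set.Ioi (0:ℝ))) (ν := volume.restrict (Set.Ioo (-π) π))
        (fun x => x ^ 5 * Real.exp (-x ^ 2 / 2))
        (fun y => (2 * π)⁻¹ * (max (Real.cos y) 0 ^ 2 * max (Real.cos (y - θ)) 0 ^ 2)),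
      MeasureTheory.integral_const_mul]
  rw [step1, step2, step3, step4, step5, radial_int, angular_int θ hθ0 hθ1]
  field_simp
end
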